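/- There exists a constant C > 0 such that for all integers k ≥ 1 and i ≥ 0: ∑_{t = 0}^{i} 2^{(2^t + 2)/k} ≤ C · (2^{(2^i + 2)/k} + Real.logb 2 (k + 1) + 1). (This bounds the total number of coordinates, up to the factor k·ln n, that the dimension-prioritized Matousek embedding assigns to density levels 0 through i: the first ≈ log₂ k terms are each O(1), and the remaining terms are dominated by a geometric series ending at the last term.) -/

import Mathlib

lemma aux_geom_half (i : ℕ) : ∑ t ∈ Finset.range (i + 1), ((1:ℝ)/2) ^ (i - t) ≤ 2 := by
  have h := Finset.sum_range_reflect (fun j => ((1:ℝ)/2) ^ j) (i + 1)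
  simp only [Nat.add_sub_cancel] at h
  rw [h]
  have := geom_sum_eq (show (1/2:ℝ) ≠ 1 by norm_num) (i + 1)
  rw [this]
  have hp : (0:ℝ) < (1/2:ℝ) ^ (i + 1) := by positivity
  rw [div_le_iff_of_neg (by norm_num : (1/2:ℝ) - 1 < 0)]
  linarith

lemma aux_rpow3 : (2:ℝ) ^ (3:ℝ) = 8 := by
  rw [show (3:ℝ) = ((3:ℕ):ℝ) by norm_num, Real.rpow_natCast]
  norm_num

/-- Bounding the total number of coordinates (up to the factor `k · ln n`) assigned
to density levels `0..i` in the dimension-prioritized Matousek embedding: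
`∑_{t=0}^{i} 2^{(2^t + 2)/k} ≤ C · (2^{(2^i + 2)/k} + log₂(k + 1) + 1)`. -/
theorem matousek_dimension_level_sum_bound :
    ∃ C : ℝ, 0 < C ∧
      ∀ (k i : ℕ), 1 ≤ k →
        ∑ t ∈ Finset.range (i + 1), (2 : ℝ) ^ (((2 : ℝ) ^ t + 2) / (k : ℝ)) ≤
          C * ((2 : ℝ) ^ (((2 : ℝ) ^ i + 2) / (k : ℝ)) + Real.logb 2 ((k : ℝ) + 1) + 1) := by
  refine ⟨8, by norm_num, fun k i hk => ?_⟩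
  have hkR : (1:ℝ) ≤ (k:ℝ) := by exact_mod_cast hk
  have hk0 : (0:ℝ) < (k:ℝ) := lt_of_lt_of_le one_pos hkR
  have hkne : k ≠ 0 := by omega
  set fI : ℝ := (2:ℝ) ^ (((2:ℝ) ^ i + 2) / (k:ℝ)) with hfIdef
  have hfI0 : 0 < fI := Real.rpow_pos_of_pos two_pos _
  have hlog0 : 0 ≤ Real.logb 2 ((k:ℝ) + 1) :=
    Real.logb_nonneg (by norm_num) (by linarith)
  rw [← Finset.sum_filter_add_sum_filter_not (Finset.range (i + 1)) (fun t => 2 ^ t ≤ k)]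
  -- Part A: small t, each term is at most 8, and there are at most log₂(k)+1 of them
  have hA : ∑ t ∈ (Finset.range (i + 1)).filter (fun t => 2 ^ t ≤ k),
      (2:ℝ) ^ (((2:ℝ) ^ t + 2) / (k:ℝ)) ≤ 8 * (Real.logb 2 ((k:ℝ) + 1) + 1) := by
    calc ∑ t ∈ (Finset.range (i + 1)).filter (fun t => 2 ^ t ≤ k),
        (2:ℝ) ^ (((2:ℝ) ^ t + 2) / (k:ℝ))
        ≤ ∑ _t ∈ (Finset.range (i + 1)).filter (fun t => 2 ^ t ≤ k), (8:ℝ) := by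
          apply Finset.sum_le_sum
          intro t ht
          have h2t : (2:ℝ) ^ t ≤ (k:ℝ) := by
            have := (Finset.mem_filter.mp ht).2
            exact_mod_cast this
          have hexp : ((2:ℝ) ^ t + 2) / (k:ℝ) ≤ 3 := by
            rw [div_le_iff₀ hk0]; linarith
          calc (2:ℝ) ^ (((2:ℝ) ^ t + 2) / (k:ℝ)) ≤ (2:ℝ) ^ (3:ℝ) :=
                Real.rpow_le_rpow_of_exponent_le one_le_two hexp
            _ = 8 := aux_rpow3
      _ = 8 * ((Finset.range (i + 1)).filter (fun t => 2 ^ t ≤ k)).card := by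
          rw [Finset.sum_const, nsmul_eq_mul, mul_comm]
      _ ≤ 8 * ((Nat.log 2 k : ℝ) + 1) := by
          have hsub : (Finset.range (i + 1)).filter (fun t => 2 ^ t ≤ k) ⊆
              Finset.range (Nat.log 2 k + 1) := by
            intro t ht
            rw [Finset.mem_range, Nat.lt_succ_iff]
            exact (Nat.le_log_iff_pow_le (by norm_num) hkne).mpr (Finset.mem_filter.mp ht).2
          have hcard := Finset.card_le_card hsub
          rw [Finset.card_range] at hcard
          have : (((Finset.range (i + 1)).filter (fun t => 2 ^ t ≤ k)).card : ℝ)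
              ≤ (Nat.log 2 k : ℝ) + 1 := by exact_mod_cast hcard
          linarith
      _ ≤ 8 * (Real.logb 2 ((k:ℝ) + 1) + 1) := by
          have hlogle : (Nat.log 2 k : ℝ) ≤ Real.logb 2 ((k:ℝ) + 1) := by
            rw [Real.le_logb_iff_rpow_le (by norm_num) (by linarith)]
            rw [Real.rpow_natCast]
            have := Nat.pow_log_le_self 2 hkne
            have : ((2 ^ Nat.log 2 k : ℕ) : ℝ) ≤ (k:ℝ) := by exact_mod_cast this
            push_cast at this
            linarith
          linarith
  -- Part B: large t, geometric decay towards the last term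
  have hB : ∑ t ∈ (Finset.range (i + 1)).filter (fun t => ¬ 2 ^ t ≤ k),
      (2:ℝ) ^ (((2:ℝ) ^ t + 2) / (k:ℝ)) ≤ 2 * fI := by
    have hterm : ∀ t ∈ (Finset.range (i + 1)).filter (fun t => ¬ 2 ^ t ≤ k),
        (2:ℝ) ^ (((2:ℝ) ^ t + 2) / (k:ℝ)) ≤ fI * ((1:ℝ)/2) ^ (i - t) := by
      intro t ht
      obtain ⟨htr, htk⟩ := Finset.mem_filter.mp ht
      have hti : t ≤ i := Nat.lt_succ_iff.mp (Finset.mem_range.mp htr)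
      have hkt : k < 2 ^ t := Nat.lt_of_not_le htk
      -- key natural-number inequality
      have hnat : k * (i - t) + 2 ^ t ≤ 2 ^ i := by
        have h1 : k * (i - t) + 2 ^ t ≤ 2 ^ t * (i - t) + 2 ^ t :=
          Nat.add_le_add_right (Nat.mul_le_mul_right _ (Nat.le_of_lt hkt)) _
        have h2 : 2 ^ t * (i - t) + 2 ^ t = 2 ^ t * (i - t + 1) := by ring
        have h3 : i - t + 1 ≤ 2 ^ (i - t) := Nat.lt_two_pow_self
        have h4 : 2 ^ t * (i - t + 1) ≤ 2 ^ t * 2 ^ (i - t) :=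
          Nat.mul_le_mul_left _ h3
        have h5 : 2 ^ t * 2 ^ (i - t) = 2 ^ i := by
          rw [← pow_add]; congr 1; omega
        omega
      have hnatR : (k:ℝ) * ((i - t : ℕ):ℝ) + (2:ℝ) ^ t ≤ (2:ℝ) ^ i := by
        exact_mod_cast hnat
      have hexp : ((2:ℝ) ^ t + 2) / (k:ℝ) ≤ ((2:ℝ) ^ i + 2) / (k:ℝ) - ((i - t : ℕ):ℝ) := by
        rw [le_sub_iff_add_le, div_add' _ _ _ (ne_of_gt hk0), div_le_div_iff₀ hk0 hk0]
        nlinarith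
      calc (2:ℝ) ^ (((2:ℝ) ^ t + 2) / (k:ℝ))
          ≤ (2:ℝ) ^ (((2:ℝ) ^ i + 2) / (k:ℝ) - ((i - t : ℕ):ℝ)) :=
            Real.rpow_le_rpow_of_exponent_le one_le_two hexp
        _ = fI * ((1:ℝ)/2) ^ (i - t) := by
            rw [Real.rpow_sub two_pos, Real.rpow_natCast, hfIdef]
            rw [div_eq_mul_inv, one_div, inv_pow]
      -- end of term bound
    calc ∑ t ∈ (Finset.range (i + 1)).filter (fun t => ¬ 2 ^ t ≤ k),
        (2:ℝ) ^ (((2:ℝ) ^ t + 2) / (k:ℝ))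
        ≤ ∑ t ∈ (Finset.range (i + 1)).filter (fun t => ¬ 2 ^ t ≤ k),
            fI * ((1:ℝ)/2) ^ (i - t) := Finset.sum_le_sum hterm
      _ ≤ ∑ t ∈ Finset.range (i + 1), fI * ((1:ℝ)/2) ^ (i - t) := by
          apply Finset.sum_le_sum_of_subset_of_nonneg (Finset.filter_subset _ _)
          intro t _ _
          positivity
      _ = fI * ∑ t ∈ Finset.range (i + 1), ((1:ℝ)/2) ^ (i - t) := by
          rw [Finset.mul_sum]
      _ ≤ fI * 2 := by
          apply mul_le_mul_of_nonneg_left (aux_geom_half i) (le_of_lt hfI0)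
      _ = 2 * fI := by ring
  linarith
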